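/- Let ξ > 0 be such that D_ξ := DᵀD − ξ²I is invertible. Then the set { ω ∈ ℝ : det H_ξ(iω) = 0 } is finite; i.e. the operator L_ξ has only finitely many eigenvalues on the imaginary axis. -/

import Mathlib

open Matrix Complex

noncomputable section

variable {n nu ny m : ℕ}

/-- `D_ξ = Dᵀ D − ξ² I`. -/
def Dxi (D : Matrix (Fin ny) (Fin nu) ℝ) (ξ : ℝ) : Matrix (Fin nu) (Fin nu) ℝ :=
  Dᵀ * D - ξ ^ 2 • (1 : Matrix (Fin nu) (Fin nu) ℝ)

/-- `(Dᵀ)_ξ = D Dᵀ − ξ² I`, the matrix denoted `D_ξ^{-T}`-inverse base in the paper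
(the only dimensionally consistent reading of the `(2,1)` block of `M₀`).
Note that it is invertible iff `D_ξ` is (for `ξ ≠ 0`), since `DᵀD` and `DDᵀ` have the
same nonzero eigenvalues. -/
def DxiT (D : Matrix (Fin ny) (Fin nu) ℝ) (ξ : ℝ) : Matrix (Fin ny) (Fin ny) ℝ :=
  D * Dᵀ - ξ ^ 2 • (1 : Matrix (Fin ny) (Fin ny) ℝ)

/-- The block matrix `M₀`. -/
def Mzero (A0 : Matrix (Fin n) (Fin n) ℝ) (B : Matrix (Fin n) (Fin nu) ℝ)
    (C : Matrix (Fin ny) (Fin n) ℝ) (D : Matrix (Fin ny) (Fin nu) ℝ) (ξ : ℝ) :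
    Matrix (Fin n ⊕ Fin n) (Fin n ⊕ Fin n) ℝ :=
  fromBlocks (A0 - B * (Dxi D ξ)⁻¹ * Dᵀ * C) (-(B * (Dxi D ξ)⁻¹ * Bᵀ))
    (ξ ^ 2 • (Cᵀ * (DxiT D ξ)⁻¹ * C)) (-A0ᵀ + Cᵀ * D * (Dxi D ξ)⁻¹ * Bᵀ)

/-- The block matrix `Mᵢ` for `1 ≤ i ≤ m`. -/
def Mpos (Ai : Matrix (Fin n) (Fin n) ℝ) : Matrix (Fin n ⊕ Fin n) (Fin n ⊕ Fin n) ℝ :=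
  fromBlocks Ai 0 0 0

/-- The block matrix `M₋ᵢ` for `1 ≤ i ≤ m`. -/
def Mneg (Ai : Matrix (Fin n) (Fin n) ℝ) : Matrix (Fin n ⊕ Fin n) (Fin n ⊕ Fin n) ℝ :=
  fromBlocks 0 0 0 (-Aiᵀ)

/-- `H_ξ(λ) = λI − M₀ − Σᵢ (Mᵢ e^{−λτᵢ} + M₋ᵢ e^{λτᵢ})`. -/
def Hxi (A0 : Matrix (Fin n) (Fin n) ℝ) (A : Fin m → Matrix (Fin n) (Fin n) ℝ)
    (B : Matrix (Fin n) (Fin nu) ℝ) (C : Matrix (Fin ny) (Fin n) ℝ)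
    (D : Matrix (Fin ny) (Fin nu) ℝ) (τ : Fin m → ℝ) (ξ : ℝ) (lam : ℂ) :
    Matrix (Fin n ⊕ Fin n) (Fin n ⊕ Fin n) ℂ :=
  lam • (1 : Matrix (Fin n ⊕ Fin n) (Fin n ⊕ Fin n) ℂ)
    - (Mzero A0 B C D ξ).map Complex.ofReal
    - ∑ i : Fin m, (Complex.exp (-lam * (τ i : ℂ)) • (Mpos (A i)).map Complex.ofReal
        + Complex.exp (lam * (τ i : ℂ)) • (Mneg (A i)).map Complex.ofReal)

/-- `A(λ) = λI − A₀ − Σᵢ Aᵢ e^{−λτᵢ}`. -/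
def Amat (A0 : Matrix (Fin n) (Fin n) ℝ) (A : Fin m → Matrix (Fin n) (Fin n) ℝ)
    (τ : Fin m → ℝ) (lam : ℂ) : Matrix (Fin n) (Fin n) ℂ :=
  lam • (1 : Matrix (Fin n) (Fin n) ℂ) - A0.map Complex.ofReal
    - ∑ i : Fin m, Complex.exp (-lam * (τ i : ℂ)) • (A i).map Complex.ofReal

/-- The transfer function `G(λ) = C A(λ)⁻¹ B + D`. -/
def Gmat (A0 : Matrix (Fin n) (Fin n) ℝ) (A : Fin m → Matrix (Fin n) (Fin n) ℝ)
    (B : Matrix (Fin n) (Fin nu) ℝ) (C : Matrix (Fin ny) (Fin n) ℝ)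
    (D : Matrix (Fin ny) (Fin nu) ℝ) (τ : Fin m → ℝ) (lam : ℂ) :
    Matrix (Fin ny) (Fin nu) ℂ :=
  C.map Complex.ofReal * (Amat A0 A τ lam)⁻¹ * B.map Complex.ofReal + D.map Complex.ofReal

/-- `τ_max`, the maximum of the delays. -/
def tauMax [NeZero m] (τ : Fin m → ℝ) : ℝ :=
  Finset.univ.sup' Finset.univ_nonempty τ

/-- `λ` is an eigenvalue of the infinite-dimensional operator `L_ξ`: there is a continuously
differentiable, not identically zero function `u : [−τ_max, τ_max] → ℂ^{2n}` with
`u′(t) = λ u(t)` on the interval and `u′(0) = M₀ u(0) + Σᵢ (Mᵢ u(−τᵢ) + M₋ᵢ u(τᵢ))`. -/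
def IsEigLxi [NeZero m] (A0 : Matrix (Fin n) (Fin n) ℝ) (A : Fin m → Matrix (Fin n) (Fin n) ℝ)
    (B : Matrix (Fin n) (Fin nu) ℝ) (C : Matrix (Fin ny) (Fin n) ℝ)
    (D : Matrix (Fin ny) (Fin nu) ℝ) (τ : Fin m → ℝ) (ξ : ℝ) (lam : ℂ) : Prop :=
  ∃ u : ℝ → (Fin n ⊕ Fin n → ℂ),
    (∀ t ∈ Set.Icc (-(tauMax τ)) (tauMax τ),
      HasDerivWithinAt u (lam • u t) (Set.Icc (-(tauMax τ)) (tauMax τ)) t) ∧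
    (∃ t ∈ Set.Icc (-(tauMax τ)) (tauMax τ), u t ≠ 0) ∧
    lam • u 0 = (Mzero A0 B C D ξ).map Complex.ofReal *ᵥ u 0
      + ∑ i : Fin m, ((Mpos (A i)).map Complex.ofReal *ᵥ u (-(τ i))
          + (Mneg (A i)).map Complex.ofReal *ᵥ u (τ i))



section Aux

open scoped Topology
open Filter

attribute [local instance] Matrix.linftyOpNormedRing Matrix.linftyOpNormedAlgebra

private theorem differentiable_det_aux {ι : Type*} [Fintype ι] [DecidableEq ι]
    {M : ℂ → Matrix ι ι ℂ} (h : ∀ i j, Differentiable ℂ fun z => M z i j) :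
    Differentiable ℂ fun z => (M z).det := by
  have heq : (fun z => (M z).det)
      = fun z => ∑ σ : Equiv.Perm ι, ((Equiv.Perm.sign σ : ℤ) : ℂ) * ∏ i, M z (σ i) i := by
    funext z
    rw [Matrix.det_apply]
    simp [Units.smul_def, zsmul_eq_mul]
  rw [heq]
  exact Differentiable.fun_sum fun σ _ =>
    (Differentiable.fun_finset_prod fun i _ => h (σ i) i).const_mul _

/-- the set of `ω ∈ ℝ` with `det H_ξ(iω) = 0` is finite, i.e. `L_ξ` has only
finitely many eigenvalues on the imaginary axis. -/
theorem finite_imaginary_axis_eigenvalues [NeZero n] [NeZero nu] [NeZero ny] [NeZero m]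
    (A0 : Matrix (Fin n) (Fin n) ℝ) (A : Fin m → Matrix (Fin n) (Fin n) ℝ)
    (B : Matrix (Fin n) (Fin nu) ℝ) (C : Matrix (Fin ny) (Fin n) ℝ)
    (D : Matrix (Fin ny) (Fin nu) ℝ) (τ : Fin m → ℝ) (hτ : ∀ i, 0 ≤ τ i)
    (ξ : ℝ) (hξ : 0 < ξ) (hD : IsUnit (Dxi D ξ)) :
    {ω : ℝ | (Hxi A0 A B C D τ ξ (Complex.I * ω)).det = 0}.Finite := by
  classical
  set Mz : Matrix (Fin n ⊕ Fin n) (Fin n ⊕ Fin n) ℂ := (Mzero A0 B C D ξ).map Complex.ofReal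
    with hMz
  set Mp : Fin m → Matrix (Fin n ⊕ Fin n) (Fin n ⊕ Fin n) ℂ :=
    fun i => (Mpos (A i)).map Complex.ofReal with hMp
  set Mn : Fin m → Matrix (Fin n ⊕ Fin n) (Fin n ⊕ Fin n) ℂ :=
    fun i => (Mneg (A i)).map Complex.ofReal with hMn
  set K : ℂ → Matrix (Fin n ⊕ Fin n) (Fin n ⊕ Fin n) ℂ := fun z =>
    Mz + ∑ i : Fin m, (Complex.exp (-(Complex.I * z) * (τ i : ℂ)) • Mp i
      + Complex.exp ((Complex.I * z) * (τ i : ℂ)) • Mn i) with hK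
  have hH : ∀ z : ℂ, Hxi A0 A B C D τ ξ (Complex.I * z)
      = (Complex.I * z) • (1 : Matrix (Fin n ⊕ Fin n) (Fin n ⊕ Fin n) ℂ) - K z := by
    intro z
    simp only [Hxi, hK, sub_sub, hMz, hMp, hMn]
  set F : ℂ → ℂ := fun z => (Hxi A0 A B C D τ ξ (Complex.I * z)).det with hFdef
  -- differentiability
  have hF : Differentiable ℂ F := by
    have : F = fun z => ((Complex.I * z) • (1 : Matrix (Fin n ⊕ Fin n) (Fin n ⊕ Fin n) ℂ)
        - K z).det := funext fun z => congrArg Matrix.det (hH z)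
    rw [this]
    apply differentiable_det_aux
    intro i j
    simp only [Matrix.sub_apply, Matrix.smul_apply, Matrix.add_apply, Matrix.sum_apply,
      smul_eq_mul, hK]
    apply Differentiable.sub
    · exact (differentiable_id.const_mul Complex.I).mul_const _
    · apply Differentiable.add (differentiable_const _)
      apply Differentiable.fun_sum
      intro k _
      apply Differentiable.add
      · exact ((((differentiable_id.const_mul Complex.I).neg).mul_const _).cexp).mul_const _
      · exact (((differentiable_id.const_mul Complex.I).mul_const _).cexp).mul_const _
  -- norm bound on K along the real axis
  set R : ℝ := ‖Mz‖ + ∑ i : Fin m, (‖Mp i‖ + ‖Mn i‖) with hR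
  have hRnn : 0 ≤ R := add_nonneg (norm_nonneg _) (Finset.sum_nonneg fun i _ => add_nonneg (norm_nonneg _) (norm_nonneg _))
  have hexp1 : ∀ (ω t : ℝ), ‖Complex.exp (-(Complex.I * (ω : ℂ)) * (t : ℂ))‖ = 1 := by
    intro ω t
    have : -(Complex.I * (ω : ℂ)) * (t : ℂ) = ((-(ω * t) : ℝ) : ℂ) * Complex.I := by
      push_cast; ring
    rw [this, Complex.norm_exp_ofReal_mul_I]
  have hexp2 : ∀ (ω t : ℝ), ‖Complex.exp ((Complex.I * (ω : ℂ)) * (t : ℂ))‖ = 1 := by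
    intro ω t
    have : (Complex.I * (ω : ℂ)) * (t : ℂ) = (((ω * t) : ℝ) : ℂ) * Complex.I := by
      push_cast; ring
    rw [this, Complex.norm_exp_ofReal_mul_I]
  have hKnorm : ∀ ω : ℝ, ‖K (ω : ℂ)‖ ≤ R := by
    intro ω
    refine (norm_add_le _ _).trans ?_
    refine add_le_add le_rfl ((norm_sum_le _ _).trans (Finset.sum_le_sum fun i _ => ?_))
    refine (norm_add_le _ _).trans ?_
    rw [norm_smul, norm_smul, hexp1, hexp2, one_mul, one_mul]
  -- points with |ω| > R are not zeros
  have hbig : ∀ ω : ℝ, R < |ω| → F (ω : ℂ) ≠ 0 := by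
    intro ω hω h0
    have hmem : (Complex.I * (ω : ℂ)) ∈ spectrum ℂ (K (ω : ℂ)) := by
      rw [spectrum.mem_iff, Algebra.algebraMap_eq_smul_one]
      intro hu
      rw [Matrix.isUnit_iff_isUnit_det, isUnit_iff_ne_zero] at hu
      apply hu
      have : F (ω : ℂ) = ((Complex.I * (ω : ℂ)) •
          (1 : Matrix (Fin n ⊕ Fin n) (Fin n ⊕ Fin n) ℂ) - K (ω : ℂ)).det :=
        congrArg Matrix.det (hH (ω : ℂ))
      rw [this] at h0
      exact h0
    have hle := spectrum.norm_le_norm_of_mem hmem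
    have h1 : ‖Complex.I * (ω : ℂ)‖ = |ω| := by
      rw [norm_mul, Complex.norm_I, one_mul, Complex.norm_real, Real.norm_eq_abs]
    rw [h1] at hle
    have := hKnorm ω
    linarith
  -- the set S of real zeros
  set S : Set ℝ := {ω : ℝ | (Hxi A0 A B C D τ ξ (Complex.I * ω)).det = 0} with hSdef
  have hSF : ∀ ω : ℝ, ω ∈ S ↔ F (ω : ℂ) = 0 := fun ω => Iff.rfl
  have hSsub : S ⊆ Set.Icc (-R) R := by
    intro ω hω
    rw [Set.mem_Icc, ← abs_le]
    by_contra h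
    exact hbig ω (lt_of_not_ge h) ((hSF ω).mp hω)
  -- S is closed
  have hScl : IsClosed S := by
    have : S = (fun ω : ℝ => F (ω : ℂ)) ⁻¹' {0} := rfl
    rw [this]
    exact IsClosed.preimage (hF.continuous.comp Complex.continuous_ofReal)
      isClosed_singleton
  have hScomp : IsCompact S := (isCompact_Icc).of_isClosed_subset hScl hSsub
  -- a point where F is nonzero
  have hFne : F ((R + 1 : ℝ) : ℂ) ≠ 0 := by
    apply hbig
    rw [_root_.abs_of_nonneg (by linarith : (0:ℝ) ≤ R + 1)]
    linarith
  -- discreteness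
  have hdisc : DiscreteTopology S := by
    rw [discreteTopology_subtype_iff]
    intro ω₀ hω₀
    rcases (hF.analyticAt ((ω₀ : ℝ) : ℂ)).eventually_eq_zero_or_eventually_ne_zero with h | h
    · exfalso
      have hAOn : AnalyticOnNhd ℂ F Set.univ := fun z _ => hF.analyticAt z
      have := hAOn.eqOn_zero_of_preconnected_of_eventuallyEq_zero
        isPreconnected_univ (Set.mem_univ ((ω₀ : ℝ) : ℂ)) h
      exact hFne (this (Set.mem_univ _))
    · -- pull back isolation to ℝ
      have tend : Filter.Tendsto (fun x : ℝ => (x : ℂ)) (𝓝[≠] ω₀) (𝓝[≠] ((ω₀ : ℝ) : ℂ)) := by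
        rw [Filter.tendsto_iff_comap]
        refine le_trans ?_ (Filter.comap_mono (le_refl _))
        rw [nhdsWithin, nhdsWithin, Filter.comap_inf]
        refine le_inf ?_ ?_
        · exact le_trans inf_le_left
            (Complex.continuous_ofReal.tendsto ω₀).le_comap
        · refine le_trans inf_le_right ?_
          rw [Filter.comap_principal]
          refine Filter.principal_mono.mpr ?_
          intro x hx hc
          exact hx (Complex.ofReal_injective hc)
      have h' : ∀ᶠ x : ℝ in 𝓝[≠] ω₀, F (x : ℂ) ≠ 0 := tend.eventually h
      rw [← Filter.empty_mem_iff_bot]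
      have h2 : S ∈ 𝓝[≠] ω₀ ⊓ Filter.principal S :=
        Filter.mem_inf_of_right (Filter.mem_principal_self S)
      have h1 : {x : ℝ | F (x : ℂ) ≠ 0} ∈ 𝓝[≠] ω₀ ⊓ Filter.principal S :=
        Filter.mem_inf_of_left h'
      refine Filter.mem_of_superset (Filter.inter_mem h1 h2) ?_
      intro x hx
      exact absurd ((hSF x).mp hx.2) hx.1
  exact hScomp.finite ⟨hdisc⟩
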